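/- Let α : X → Set(M X) be a map whose values are non-empty convex subsets of M X. Then for all x ∈ X and ψ ∈ M X: x ⇒_α ψ if and only if ψ ∈ α*(x), where α*(x) := ⋃_{n ≥ 0} (α ∨ 1)ⁿ(x). -/

import Mathlib

open scoped NNReal Pointwise

/-- `M X`: finitely supported functions `X →₀ ℝ≥0`. -/
abbrev M (X : Type*) : Type _ := X →₀ ℝ≥0

/-- Kleisli composition of the monad `CM`:
`(g·f)(x) = ⋃_{φ ∈ f(x)} ∑_{y ∈ supp(φ)} φ(y) • g(y)`, where the finite sum of sets is the
Minkowski sum (the empty sum being `{0}`). -/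
noncomputable def kcompCM {X Y Z : Type*} (g : Y → Set (M Z)) (f : X → Set (M Y)) :
    X → Set (M Z) :=
  fun x => ⋃ φ ∈ f x, ∑ y ∈ φ.support, φ y • g y

/-- The unit of the monad `CM`: `1(x) = {δ_x}`. -/
noncomputable def oneCM (X : Type*) : X → Set (M X) :=
  fun x => {Finsupp.single x 1}

/-- `(α ∨ 1)(x) = conv(α(x) ∪ {δ_x})`. -/
noncomputable def orOne {X : Type*} (α : X → Set (M X)) : X → Set (M X) :=
  fun x => convexHull ℝ≥0 (α x ∪ {Finsupp.single x 1})

/-- Kleisli powers of a `CM`-coalgebra. -/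
noncomputable def kpowCM {X : Type*} (β : X → Set (M X)) : ℕ → X → Set (M X)
  | 0 => oneCM X
  | n + 1 => kcompCM β (kpowCM β n)

/-- The inductively defined relation `x ⇒ⁿ_α ψ`. -/
inductive Steps {X : Type*} (α : X → Set (M X)) : ℕ → X → M X → Prop
  | zero (x : X) : Steps α 0 x (Finsupp.single x 1)
  | succ {n : ℕ} {x : X} (φ : M X) (hφ : φ ∈ α x) (ψ : X → M X)
      (hψ : ∀ y ∈ φ.support, Steps α n y (ψ y)) {ψ' : M X} (hψ' : Steps α n x ψ')
      (p : ℝ≥0) (hp : p ≤ 1) :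
      Steps α (n + 1) x (p • (∑ y ∈ φ.support, φ y • ψ y) + (1 - p) • ψ')

/-! ### Auxiliary lemmas -/

private lemma kpowCM_zero {X : Type*} (β : X → Set (M X)) (x : X) :
    kpowCM β 0 x = {Finsupp.single x 1} := rfl

private lemma kpowCM_succ' {X : Type*} (β : X → Set (M X)) (n : ℕ) :
    kpowCM β (n + 1) = kcompCM β (kpowCM β n) := by rw [kpowCM]

private lemma kpowCM_succ {X : Type*} (β : X → Set (M X)) (n : ℕ) (x : X) :
    kpowCM β (n + 1) x = ⋃ φ ∈ kpowCM β n x, ∑ y ∈ φ.support, φ y • β y := by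
  rw [kpowCM_succ']; rfl

private lemma mem_orOne_left {X : Type*} {α : X → Set (M X)} {x : X} {φ : M X}
    (h : φ ∈ α x) : φ ∈ orOne α x :=
  subset_convexHull ℝ≥0 (α x ∪ {Finsupp.single x 1}) (Or.inl h)

private lemma single_mem_orOne {X : Type*} (α : X → Set (M X)) (x : X) :
    (Finsupp.single x 1 : M X) ∈ orOne α x :=
  subset_convexHull ℝ≥0 (α x ∪ {Finsupp.single x 1}) (Or.inr rfl)

private lemma convex_orOne {X : Type*} (α : X → Set (M X)) (x : X) :
    Convex ℝ≥0 (orOne α x) :=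
  convex_convexHull ℝ≥0 (α x ∪ {Finsupp.single x 1})

/-- Rewriting a weighted sum over the support of `χ` as a scaled sum over the support of `φ`,
provided the weights `c * φ y` vanish outside the support of `χ`. -/
private lemma sumB {X : Type*} (χ φ : M X) (c : ℝ≥0) (f : X → M X)
    (H : ∀ y, χ y = 0 → c * φ y = 0) :
    ∑ y ∈ χ.support, (c * φ y) • f y = c • ∑ y ∈ φ.support, φ y • f y := by
  classical
  rw [Finset.smul_sum]
  simp_rw [smul_smul]
  have h1 : ∑ y ∈ χ.support, (c * φ y) • f y
      = ∑ y ∈ χ.support ∪ φ.support, (c * φ y) • f y := by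
    apply Finset.sum_subset Finset.subset_union_left
    intro y _ hy
    rw [H y (Finsupp.notMem_support_iff.mp hy), zero_smul]
  have h2 : ∑ y ∈ φ.support, (c * φ y) • f y
      = ∑ y ∈ χ.support ∪ φ.support, (c * φ y) • f y := by
    apply Finset.sum_subset Finset.subset_union_right
    intro y _ hy
    rw [Finsupp.notMem_support_iff.mp hy, mul_zero, zero_smul]
  rw [h1, h2]

/-- A convex combination with possibly zero coefficients lies in a convex set. -/
private lemma convex_comb_mem {E : Type*} [AddCommMonoid E] [Module ℝ≥0 E] {s : Set E}
    (hs : Convex ℝ≥0 s) {a b : ℝ≥0} {u v : E} (hab : a + b = 1)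
    (hu : a ≠ 0 → u ∈ s) (hv : b ≠ 0 → v ∈ s) : a • u + b • v ∈ s := by
  rcases eq_or_ne a 0 with rfl | ha
  · rw [zero_add] at hab
    subst hab
    simpa using hv one_ne_zero
  rcases eq_or_ne b 0 with rfl | hb
  · rw [add_zero] at hab
    subst hab
    simpa using hu one_ne_zero
  exact hs (hu ha) (hv hb) zero_le zero_le hab

/-- Extract a representation of an element of a Minkowski sum `∑ y, φ y • g y`. -/
private lemma exists_rep {X : Type*} {g : X → Set (M X)} (hg' : ∀ y, (g y).Nonempty)
    {φ : M X} {u : M X} (hu : u ∈ ∑ y ∈ φ.support, φ y • g y) :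
    ∃ γ : X → M X, (∀ y, γ y ∈ g y) ∧ u = ∑ y ∈ φ.support, φ y • γ y := by
  classical
  obtain ⟨gu, hgu, hsum⟩ := (Set.mem_finset_sum _ _ _).mp hu
  refine ⟨fun y => if h : y ∈ φ.support then (Set.mem_smul_set.mp (hgu h)).choose
    else (hg' y).some, fun y => ?_, ?_⟩
  · by_cases h : y ∈ φ.support
    · simp only [dif_pos h]
      exact (Set.mem_smul_set.mp (hgu h)).choose_spec.1
    · simp only [dif_neg h]
      exact (hg' y).some_mem
  · rw [← hsum]
    apply Finset.sum_congr rfl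
    intro y hy
    simp only [dif_pos hy]
    exact ((Set.mem_smul_set.mp (hgu hy)).choose_spec.2).symm

private lemma mem_orOne_iff {X : Type*} {α : X → Set (M X)}
    (hα : ∀ x, (α x).Nonempty ∧ Convex ℝ≥0 (α x)) (x : X) (u : M X) :
    u ∈ orOne α x ↔ ∃ φ ∈ α x, ∃ p ≤ (1:ℝ≥0), u = p • φ + (1 - p) • Finsupp.single x 1 := by
  constructor
  · intro hu
    have hS : convexHull ℝ≥0 (α x ∪ {Finsupp.single x 1}) ⊆
        {u | ∃ φ ∈ α x, ∃ p ≤ (1:ℝ≥0), u = p • φ + (1 - p) • Finsupp.single x 1} := by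
      apply convexHull_min
      · rintro u (hu | hu)
        · exact ⟨u, hu, 1, le_refl 1, by simp⟩
        · obtain ⟨φ₀, hφ₀⟩ := (hα x).1
          exact ⟨φ₀, hφ₀, 0, zero_le, by rw [Set.mem_singleton_iff.mp hu]; simp⟩
      · rintro u ⟨φ, hφ, p, hp, rfl⟩ v ⟨φ', hφ', q, hq, rfl⟩ t s ht hs hts
        set a : ℝ≥0 := t * p + s * q with ha_def
        have ha1 : a ≤ 1 := by
          calc t * p + s * q ≤ t * 1 + s * 1 :=
                add_le_add (mul_le_mul_right hp t) (mul_le_mul_right hq s)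
            _ = 1 := by rw [mul_one, mul_one, hts]
        have hkey2 : t * (1 - p) + s * (1 - q) = 1 - a := by
          have h1 : a + (t * (1 - p) + s * (1 - q)) = 1 := by
            have e1 : p + (1 - p) = 1 := add_tsub_cancel_of_le hp
            have e2 : q + (1 - q) = 1 := add_tsub_cancel_of_le hq
            calc a + (t * (1 - p) + s * (1 - q))
                = t * (p + (1 - p)) + s * (q + (1 - q)) := by rw [ha_def]; ring
              _ = 1 := by rw [e1, e2, mul_one, mul_one, hts]
          exact eq_tsub_of_add_eq (by rw [add_comm]; exact h1)
        by_cases ha : a = 0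
        · obtain ⟨htp, hsq⟩ := add_eq_zero.mp ha
          refine ⟨φ, hφ, a, ha1, ?_⟩
          calc t • (p • φ + (1 - p) • Finsupp.single x 1)
                + s • (q • φ' + (1 - q) • Finsupp.single x 1)
              = (t * p) • φ + (s * q) • φ'
                + (t * (1 - p) + s * (1 - q)) • Finsupp.single x 1 := by
                simp only [smul_add, smul_smul, add_smul]; abel
            _ = a • φ + (1 - a) • Finsupp.single x 1 := by
                rw [hkey2, htp, hsq, ha]; simp
        · set φ'' : M X := (t * p / a) • φ + (s * q / a) • φ' with hφ''_def
          have hφ''mem : φ'' ∈ α x := by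
            apply (hα x).2 hφ hφ' zero_le zero_le
            rw [← add_div, ha_def, div_self ha]
          have key : (t * p) • φ + (s * q) • φ' = a • φ'' := by
            rw [hφ''_def, smul_add, smul_smul, smul_smul, mul_comm a,
              div_mul_cancel₀ _ ha, mul_comm a, div_mul_cancel₀ _ ha]
          refine ⟨φ'', hφ''mem, a, ha1, ?_⟩
          calc t • (p • φ + (1 - p) • Finsupp.single x 1)
                + s • (q • φ' + (1 - q) • Finsupp.single x 1)
              = (t * p) • φ + (s * q) • φ'
                + (t * (1 - p) + s * (1 - q)) • Finsupp.single x 1 := by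
                simp only [smul_add, smul_smul, add_smul]; abel
            _ = a • φ'' + (1 - a) • Finsupp.single x 1 := by rw [key, hkey2]
    exact hS hu
  · rintro ⟨φ, hφ, p, hp, rfl⟩
    exact convex_orOne α x (mem_orOne_left hφ) (single_mem_orOne α x)
      zero_le zero_le (add_tsub_cancel_of_le hp)

private lemma sum_single_one {X : Type*} (ρ : M X) :
    ∑ y ∈ ρ.support, ρ y • (Finsupp.single y 1 : M X) = ρ := by
  have h := Finsupp.sum_single ρ
  rw [Finsupp.sum] at h
  calc ∑ y ∈ ρ.support, ρ y • (Finsupp.single y 1 : M X)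
      = ∑ y ∈ ρ.support, Finsupp.single y (ρ y) := by
        refine Finset.sum_congr rfl fun y _ => ?_
        rw [Finsupp.smul_single, smul_eq_mul, mul_one]
    _ = ρ := h

private lemma linearCombination_eq {X : Type*} (u : X → M X) (φ : M X) :
    Finsupp.linearCombination ℝ≥0 u φ = ∑ y ∈ φ.support, φ y • u y := by
  rw [Finsupp.linearCombination_apply, Finsupp.sum]

private lemma single_mem_kpow {X : Type*} (α : X → Set (M X)) :
    ∀ n (x : X), (Finsupp.single x 1 : M X) ∈ kpowCM (orOne α) n x
  | 0, x => by rw [kpowCM_zero]; rfl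
  | n + 1, x => by
    rw [kpowCM_succ]
    refine Set.mem_iUnion₂.mpr ⟨Finsupp.single x 1, single_mem_kpow α n x, ?_⟩
    rw [Finsupp.support_single_ne_zero x one_ne_zero, Finset.sum_singleton,
      Finsupp.single_eq_same]
    exact Set.mem_smul_set.mpr ⟨Finsupp.single x 1, single_mem_orOne α x, one_smul _ _⟩

private lemma orOne_nonempty {X : Type*} (α : X → Set (M X)) (y : X) :
    (orOne α y).Nonempty :=
  ⟨Finsupp.single y 1, single_mem_orOne α y⟩

private lemma kpow_nonempty {X : Type*} (α : X → Set (M X)) (n : ℕ) (x : X) :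
    (kpowCM (orOne α) n x).Nonempty :=
  ⟨Finsupp.single x 1, single_mem_kpow α n x⟩

/-- Finite convex combinations lie in a convex set (version for `ℝ≥0`-modules). -/
private lemma convex_sum_mem {E : Type*} [AddCommMonoid E] [Module ℝ≥0 E] {s : Set E}
    (hs : Convex ℝ≥0 s) {ι : Type*} (t : Finset ι) :
    ∀ (w : ι → ℝ≥0) (z : ι → E), (∑ i ∈ t, w i) = 1 → (∀ i ∈ t, z i ∈ s) →
      ∑ i ∈ t, w i • z i ∈ s := by
  classical
  induction t using Finset.induction_on with
  | empty => intro w z h1 _; exact absurd h1 (by simp)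
  | @insert i t hit ih =>
    intro w z h1 hz
    rw [Finset.sum_insert hit] at h1 ⊢
    by_cases hb : ∑ j ∈ t, w j = 0
    · have hwi : w i = 1 := by rwa [hb, add_zero] at h1
      have hzero : ∑ j ∈ t, w j • z j = 0 := by
        refine Finset.sum_eq_zero fun j hj => ?_
        rw [(Finset.sum_eq_zero_iff.mp hb) j hj, zero_smul]
      rw [hzero, add_zero, hwi, one_smul]
      exact hz i (Finset.mem_insert_self i t)
    · have hin : ∑ j ∈ t, w j / (∑ j ∈ t, w j) = 1 := by
        rw [← Finset.sum_div, div_self hb]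
      have hmem : ∑ j ∈ t, (w j / (∑ j ∈ t, w j)) • z j ∈ s :=
        ih (fun j => w j / (∑ j ∈ t, w j)) z hin
          (fun j hj => hz j (Finset.mem_insert_of_mem hj))
      have hre : ∑ j ∈ t, w j • z j
          = (∑ j ∈ t, w j) • ∑ j ∈ t, (w j / (∑ j ∈ t, w j)) • z j := by
        rw [Finset.smul_sum]
        refine Finset.sum_congr rfl fun j hj => ?_
        rw [smul_smul, mul_comm, div_mul_cancel₀ _ hb]
      rw [hre]
      exact hs (hz i (Finset.mem_insert_self i t)) hmem zero_le zero_le h1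

private lemma kcomp_convex {X : Type*} {f g : X → Set (M X)}
    (hf : ∀ x, Convex ℝ≥0 (f x)) (hg : ∀ y, Convex ℝ≥0 (g y))
    (hg' : ∀ y, (g y).Nonempty) (x : X) : Convex ℝ≥0 (kcompCM g f x) := by
  rintro u hu v hv t s ht hs hts
  obtain ⟨φ, hφ, hu⟩ := Set.mem_iUnion₂.mp hu
  obtain ⟨φ', hφ', hv⟩ := Set.mem_iUnion₂.mp hv
  obtain ⟨γu, hγu, rfl⟩ := exists_rep hg' hu
  obtain ⟨γv, hγv, rfl⟩ := exists_rep hg' hv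
  set χ : M X := t • φ + s • φ' with hχ_def
  have hχf : χ ∈ f x := hf x hφ hφ' ht hs hts
  have hχy : ∀ y, χ y = t * φ y + s * φ' y := fun y => by
    rw [hχ_def, Finsupp.add_apply, Finsupp.smul_apply, Finsupp.smul_apply,
      smul_eq_mul, smul_eq_mul]
  set e : X → M X := fun y => (χ y)⁻¹ • ((t * φ y) • γu y + (s * φ' y) • γv y) with he_def
  have key : ∀ y ∈ χ.support, χ y • e y = (t * φ y) • γu y + (s * φ' y) • γv y := by
    intro y hy
    rw [he_def]
    rw [smul_smul, mul_inv_cancel₀ (Finsupp.mem_support_iff.mp hy), one_smul]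
  have hmem : ∀ y ∈ χ.support, e y ∈ g y := by
    intro y hy
    have hne : χ y ≠ 0 := Finsupp.mem_support_iff.mp hy
    have hab : (χ y)⁻¹ * (t * φ y) + (χ y)⁻¹ * (s * φ' y) = 1 := by
      rw [← mul_add, ← hχy, inv_mul_cancel₀ hne]
    have he : e y = ((χ y)⁻¹ * (t * φ y)) • γu y + ((χ y)⁻¹ * (s * φ' y)) • γv y := by
      rw [he_def]; simp only [smul_add, smul_smul]
    rw [he]
    exact hg y (hγu y) (hγv y) zero_le zero_le hab
  have hsum : t • (∑ y ∈ φ.support, φ y • γu y) + s • (∑ y ∈ φ'.support, φ' y • γv y)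
      = ∑ y ∈ χ.support, χ y • e y := by
    rw [Finset.sum_congr rfl key, Finset.sum_add_distrib,
      sumB χ φ t γu (fun y h => ((add_eq_zero.mp ((hχy y).symm.trans h)).1)),
      sumB χ φ' s γv (fun y h => ((add_eq_zero.mp ((hχy y).symm.trans h)).2))]
  refine Set.mem_iUnion₂.mpr ⟨χ, hχf, ?_⟩
  rw [hsum]
  exact (Set.mem_finset_sum _ _ _).mpr
    ⟨fun y => χ y • e y, fun hy => Set.smul_mem_smul_set (hmem _ hy), rfl⟩

private lemma kpow_convex {X : Type*} (α : X → Set (M X)) :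
    ∀ n (x : X), Convex ℝ≥0 (kpowCM (orOne α) n x)
  | 0, x => convex_singleton _
  | n + 1, x => by
    rw [kpowCM_succ']
    exact kcomp_convex (kpow_convex α n) (fun y => convex_orOne α y)
      (fun y => orOne_nonempty α y) x

/-- Prepending one `orOne` step to `n` Kleisli steps lands in the `(n+1)`-th Kleisli power. -/
private lemma kpow_prepend {X : Type*} (α : X → Set (M X)) :
    ∀ n (x : X) (u : M X), u ∈ orOne α x → ∀ e : X → M X,
      (∀ y, e y ∈ kpowCM (orOne α) n y) →
      ∑ y ∈ u.support, u y • e y ∈ kpowCM (orOne α) (n + 1) x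
  | 0, x, u, hu, e, hE => by
    have he : ∀ y ∈ u.support, u y • e y = u y • (Finsupp.single y 1 : M X) := by
      intro y _
      have : e y ∈ ({Finsupp.single y 1} : Set (M X)) := by
        rw [← kpowCM_zero (orOne α) y]; exact hE y
      rw [Set.mem_singleton_iff.mp this]
    rw [Finset.sum_congr rfl he, sum_single_one]
    rw [kpowCM_succ]
    refine Set.mem_iUnion₂.mpr ⟨Finsupp.single x 1, single_mem_kpow α 0 x, ?_⟩
    rw [Finsupp.support_single_ne_zero x one_ne_zero, Finset.sum_singleton,
      Finsupp.single_eq_same]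
    exact Set.mem_smul_set.mpr ⟨u, hu, one_smul _ _⟩
  | n + 1, x, u, hu, e, hE => by
    classical
    have h : ∀ y, ∃ σ : M X, σ ∈ kpowCM (orOne α) n y ∧ ∃ w : X → M X,
        (∀ z, w z ∈ orOne α z) ∧ e y = ∑ z ∈ σ.support, σ z • w z := by
      intro y
      have hy := hE y
      rw [kpowCM_succ] at hy
      obtain ⟨σ, hσ, hy'⟩ := Set.mem_iUnion₂.mp hy
      obtain ⟨w, hw, hy''⟩ := exists_rep (orOne_nonempty α) hy'
      exact ⟨σ, hσ, w, hw, hy''⟩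
    choose σ hσ w hw he using h
    set τ : M X := ∑ y ∈ u.support, u y • σ y with hτ_def
    have hτ : τ ∈ kpowCM (orOne α) (n + 1) x := kpow_prepend α n x u hu σ hσ
    have hτ_apply : ∀ z, τ z = ∑ y ∈ u.support, u y * σ y z := by
      intro z
      rw [hτ_def, Finsupp.finset_sum_apply]
      exact Finset.sum_congr rfl fun y _ => by
        rw [Finsupp.smul_apply, smul_eq_mul]
    set w' : X → M X :=
      fun z => (τ z)⁻¹ • ∑ y ∈ u.support, (u y * σ y z) • w y z with hw'_def
    have hw' : ∀ z ∈ τ.support, w' z ∈ orOne α z := by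
      intro z hz
      have hne : τ z ≠ 0 := Finsupp.mem_support_iff.mp hz
      have hre : w' z = ∑ y ∈ u.support, ((τ z)⁻¹ * (u y * σ y z)) • w y z := by
        simp only [hw'_def]
        rw [Finset.smul_sum]
        exact Finset.sum_congr rfl fun y _ => by rw [smul_smul]
      rw [hre]
      refine convex_sum_mem (convex_orOne α z) u.support _ _ ?_ (fun y _ => hw y z)
      rw [← Finset.mul_sum, ← hτ_apply, inv_mul_cancel₀ hne]
    have key : ∑ y ∈ u.support, u y • e y = ∑ z ∈ τ.support, τ z • w' z := by
      have step1 : ∑ y ∈ u.support, u y • e y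
          = ∑ y ∈ u.support, ∑ z ∈ τ.support, (u y * σ y z) • w y z := by
        refine Finset.sum_congr rfl fun y hy => ?_
        rw [he y]
        refine (sumB τ (σ y) (u y) (w y) fun z hz => ?_).symm
        have := (hτ_apply z).symm.trans hz
        exact (Finset.sum_eq_zero_iff.mp this) y hy
      have step2 : ∀ z ∈ τ.support,
          τ z • w' z = ∑ y ∈ u.support, (u y * σ y z) • w y z := by
        intro z hz
        simp only [hw'_def]
        rw [smul_smul, mul_inv_cancel₀ (Finsupp.mem_support_iff.mp hz), one_smul]
      rw [step1, Finset.sum_comm, Finset.sum_congr rfl step2]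
    rw [key, kpowCM_succ]
    refine Set.mem_iUnion₂.mpr ⟨τ, hτ, ?_⟩
    exact (Set.mem_finset_sum _ _ _).mpr
      ⟨fun z => τ z • w' z, fun hz => Set.smul_mem_smul_set (hw' _ hz), rfl⟩

/-- Appending one `orOne` step to a `Steps` derivation. -/
private lemma steps_append {X : Type*} {α : X → Set (M X)}
    (hα : ∀ x, (α x).Nonempty ∧ Convex ℝ≥0 (α x)) {n : ℕ} {x : X} {φ : M X}
    (h : Steps α n x φ) (u : X → M X) (hu : ∀ y, u y ∈ orOne α y) :
    Steps α (n + 1) x (∑ y ∈ φ.support, φ y • u y) := by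
  induction h with
  | zero x =>
    rw [Finsupp.support_single_ne_zero x one_ne_zero, Finset.sum_singleton,
      Finsupp.single_eq_same, one_smul]
    obtain ⟨ρ, hρ, p, hp, hux⟩ := (mem_orOne_iff hα x (u x)).mp (hu x)
    have hstep := Steps.succ ρ hρ (fun y => Finsupp.single y 1)
      (fun y _ => Steps.zero y) (Steps.zero x) p hp
    rw [sum_single_one] at hstep
    rw [hux]
    exact hstep
  | @succ n x ρ hρ ψ hψ ψ' hψ' p hp ihψ ihψ' =>
    have key : ∑ z ∈ (p • (∑ y ∈ ρ.support, ρ y • ψ y) + (1 - p) • ψ').support,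
        (p • (∑ y ∈ ρ.support, ρ y • ψ y) + (1 - p) • ψ') z • u z
        = p • (∑ y ∈ ρ.support, ρ y • (∑ z ∈ (ψ y).support, (ψ y) z • u z))
          + (1 - p) • (∑ z ∈ ψ'.support, ψ' z • u z) := by
      have h1 : Finsupp.linearCombination ℝ≥0 u
          (p • (∑ y ∈ ρ.support, ρ y • ψ y) + (1 - p) • ψ')
          = p • Finsupp.linearCombination ℝ≥0 u (∑ y ∈ ρ.support, ρ y • ψ y)
            + (1 - p) • Finsupp.linearCombination ℝ≥0 u ψ' := by
        rw [map_add, map_smul, map_smul]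
      have h2 : Finsupp.linearCombination ℝ≥0 u (∑ y ∈ ρ.support, ρ y • ψ y)
          = ∑ y ∈ ρ.support, ρ y • Finsupp.linearCombination ℝ≥0 u (ψ y) := by
        rw [map_sum]
        exact Finset.sum_congr rfl fun y _ => map_smul _ _ _
      rw [← linearCombination_eq u, h1, h2]
      simp only [linearCombination_eq]
    rw [key]
    exact Steps.succ ρ hρ (fun y => ∑ z ∈ (ψ y).support, (ψ y) z • u z)
      (fun y hy => ihψ y hy) ihψ' p hp

private lemma steps_to_mem {X : Type*} {α : X → Set (M X)}
    (hα : ∀ x, (α x).Nonempty ∧ Convex ℝ≥0 (α x)) {n : ℕ} {x : X} {ψ : M X}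
    (h : Steps α n x ψ) : ψ ∈ kpowCM (orOne α) n x := by
  induction h with
  | zero x => rw [kpowCM_zero]; rfl
  | @succ n x φ hφ ψ hψ ψ' hψ' p hp ihψ ihψ' =>
    classical
    set δ : M X := Finsupp.single x 1 with hδ_def
    set χ : M X := p • φ + (1 - p) • δ with hχ_def
    have hχmem : χ ∈ orOne α x :=
      convex_orOne α x (mem_orOne_left hφ) (single_mem_orOne α x)
        zero_le zero_le (add_tsub_cancel_of_le hp)
    have hχy : ∀ y, χ y = p * φ y + (1 - p) * δ y := fun y => by
      rw [hχ_def, Finsupp.add_apply, Finsupp.smul_apply, Finsupp.smul_apply,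
        smul_eq_mul, smul_eq_mul]
    set e : X → M X := fun y =>
      if y ∈ χ.support then (χ y)⁻¹ • ((p * φ y) • ψ y + ((1 - p) * δ y) • ψ')
      else Finsupp.single y 1 with he_def
    have key : ∀ y ∈ χ.support, χ y • e y = (p * φ y) • ψ y + ((1 - p) * δ y) • ψ' := by
      intro y hy
      rw [he_def]
      simp only [if_pos hy]
      rw [smul_smul, mul_inv_cancel₀ (Finsupp.mem_support_iff.mp hy), one_smul]
    have hmem : ∀ y, e y ∈ kpowCM (orOne α) n y := by
      intro y
      by_cases hy : y ∈ χ.support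
      · have hne : χ y ≠ 0 := Finsupp.mem_support_iff.mp hy
        have hab : (χ y)⁻¹ * (p * φ y) + (χ y)⁻¹ * ((1 - p) * δ y) = 1 := by
          rw [← mul_add, ← hχy, inv_mul_cancel₀ hne]
        have he : e y = ((χ y)⁻¹ * (p * φ y)) • ψ y + ((χ y)⁻¹ * ((1 - p) * δ y)) • ψ' := by
          rw [he_def]
          simp only [if_pos hy]
          rw [smul_add, smul_smul, smul_smul]
        rw [he]
        apply convex_comb_mem (kpow_convex α n y) hab
        · intro ha
          have hyφ : y ∈ φ.support := by
            rw [Finsupp.mem_support_iff]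
            intro h0
            exact ha (by rw [h0, mul_zero, mul_zero])
          exact ihψ y hyφ
        · intro hb
          have hyx : y = x := by
            by_contra hne'
            exact hb (by rw [hδ_def, Finsupp.single_eq_of_ne' (Ne.symm hne'), mul_zero, mul_zero])
          rw [hyx]
          exact ihψ'
      · have : e y = Finsupp.single y 1 := by rw [he_def]; simp only [if_neg hy]
        rw [this]
        exact single_mem_kpow α n y
    have hsum : ∑ y ∈ χ.support, χ y • e y
        = p • (∑ y ∈ φ.support, φ y • ψ y) + (1 - p) • ψ' := by
      rw [Finset.sum_congr rfl key, Finset.sum_add_distrib,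
        sumB χ φ p ψ (fun y h => ((add_eq_zero.mp ((hχy y).symm.trans h)).1)),
        sumB χ δ (1 - p) (fun _ => ψ') (fun y h => ((add_eq_zero.mp ((hχy y).symm.trans h)).2))]
      congr 1
      rw [hδ_def, Finsupp.support_single_ne_zero x one_ne_zero, Finset.sum_singleton,
        Finsupp.single_eq_same, one_smul]
    rw [← hsum]
    exact kpow_prepend α n x χ hχmem e hmem

private lemma mem_to_steps {X : Type*} {α : X → Set (M X)}
    (hα : ∀ x, (α x).Nonempty ∧ Convex ℝ≥0 (α x)) :
    ∀ (n : ℕ) (x : X) (ψ : M X), ψ ∈ kpowCM (orOne α) n x → Steps α n x ψ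
  | 0, x, ψ, h => by
    rw [kpowCM_zero] at h
    rw [Set.mem_singleton_iff.mp h]
    exact Steps.zero x
  | n + 1, x, ψ, h => by
    rw [kpowCM_succ] at h
    obtain ⟨φ, hφ, hψ⟩ := Set.mem_iUnion₂.mp h
    obtain ⟨u, hu, rfl⟩ := exists_rep (orOne_nonempty α) hψ
    exact steps_append hα (mem_to_steps hα n x φ hφ) u hu

/-- For a `CM`-coalgebra `α` with non-empty convex values: `x ⇒_α ψ` iff `ψ ∈ α*(x)`,
where `α*(x) = ⋃ₙ (α ∨ 1)ⁿ(x)`. -/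
theorem steps_iff_mem_saturation {X : Type*} (α : X → Set (M X))
    (hα : ∀ x, (α x).Nonempty ∧ Convex ℝ≥0 (α x)) (x : X) (ψ : M X) :
    (∃ n, Steps α n x ψ) ↔ ψ ∈ ⋃ n, kpowCM (orOne α) n x := by
  constructor
  · rintro ⟨n, h⟩
    exact Set.mem_iUnion.mpr ⟨n, steps_to_mem hα h⟩
  · intro h
    obtain ⟨n, h⟩ := Set.mem_iUnion.mp h
    exact ⟨n, mem_to_steps hα n x ψ h⟩
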